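/- Let G be a finite directed graph (quiver) with vertex set G_0 and edge set G_1 that is circuit-free, i.e. contains no directed path of nonzero length from any vertex to itself. Then the free category F(G) on G (whose objects are the vertices of G and whose morphisms are directed paths in G) is a finite category, it has Möbius inversion with μ = δ − ζ_G (where ζ_G(a,b) is the number of edges from a to b), and its Euler characteristic is defined and equals |G_0| − |G_1|. -/
import Mathlib

open CategoryTheory

universe u v

namespace Stmt11Aux

variable {V : Type u} [Quiver.{v + 1} V]

def endEquiv (a c : V) :
    Quiver.Path a c ≃ (PLift (a = c) ⊕ Σ b : V, Quiver.Path a b × (b ⟶ c)) where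
  toFun p := match p with
    | Quiver.Path.nil => Sum.inl ⟨rfl⟩
    | Quiver.Path.cons p e => Sum.inr ⟨_, p, e⟩
  invFun x := match x with
    | Sum.inl ⟨h⟩ => h ▸ Quiver.Path.nil
    | Sum.inr ⟨_, p, e⟩ => p.cons e
  left_inv p := by cases p <;> rfl
  right_inv x := by
    rcases x with ⟨h⟩ | ⟨b, p, e⟩
    · obtain ⟨h⟩ := h; subst h; rfl
    · rfl

theorem finitePath [Fintype V] [∀ a b : V, Fintype (a ⟶ b)]
    (circuitFree : ∀ (a : V) (p : Quiver.Path a a), p.length = 0)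
    (a c : V) : Finite (Quiver.Path a c) := by
  classical
  set r : V → V → Prop := fun b c => ∃ p : Quiver.Path b c, 0 < p.length with hr
  haveI : IsTrans V r := ⟨by
    rintro x y z ⟨p, hp⟩ ⟨q, hq⟩
    exact ⟨p.comp q, by simp [Quiver.Path.length_comp]; omega⟩⟩
  haveI : IsIrrefl V r := ⟨by
    rintro x ⟨p, hp⟩
    simp [circuitFree x p] at hp⟩
  have wf : WellFounded r := Finite.wellFounded_of_trans_of_irrefl r
  induction c using wf.induction with
  | _ c IH =>
    haveI : ∀ b : V, Finite (Quiver.Path a b × (b ⟶ c)) := by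
      intro b
      by_cases h : Nonempty (b ⟶ c)
      · obtain ⟨e⟩ := h
        haveI := IH b ⟨e.toPath, by simp [Quiver.Hom.toPath]⟩
        infer_instance
      · haveI : IsEmpty (b ⟶ c) := not_nonempty_iff.mp h
        infer_instance
    exact Finite.of_equiv _ (endEquiv a c).symm

end Stmt11Aux

namespace Stmt11Aux

open scoped Classical in
theorem card_eq {V : Type u} [Quiver.{v + 1} V] [Fintype V] [∀ a b : V, Fintype (a ⟶ b)]
    (circuitFree : ∀ (a : V) (p : Quiver.Path a a), p.length = 0)
    (a c : V) :
    (Nat.card (Quiver.Path a c) : ℚ) =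
      (if a = c then 1 else 0) +
        ∑ b : V, (Nat.card (Quiver.Path a b) : ℚ) * (Fintype.card (b ⟶ c) : ℚ) := by
  classical
  haveI : ∀ x y : V, Finite (Quiver.Path x y) := finitePath circuitFree
  haveI : ∀ x y : V, Fintype (Quiver.Path x y) := fun x y => Fintype.ofFinite _
  rw [Nat.card_eq_fintype_card, Fintype.card_congr (endEquiv a c)]
  push_cast [Fintype.card_sum, Fintype.card_sigma, Fintype.card_prod, Nat.card_eq_fintype_card]
  by_cases h : a = c
  · subst h; simp
  · simp [h]

end Stmt11Aux

namespace Stmt11Aux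

open scoped Classical in
theorem matrix_eqs {V : Type u} [Quiver.{v + 1} V] [Fintype V] [∀ a b : V, Fintype (a ⟶ b)]
    (circuitFree : ∀ (a : V) (p : Quiver.Path a a), p.length = 0) :
    (Matrix.of fun a b : V => (Nat.card (Quiver.Path a b) : ℚ)) *
      (1 - (Matrix.of fun a b : V => (Fintype.card (a ⟶ b) : ℚ))) = 1 ∧
    ((1 : Matrix V V ℚ) - (Matrix.of fun a b : V => (Fintype.card (a ⟶ b) : ℚ))) *
      (Matrix.of fun a b : V => (Nat.card (Quiver.Path a b) : ℚ)) = 1 := by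
  classical
  set Z : Matrix V V ℚ := Matrix.of fun a b => (Nat.card (Quiver.Path a b) : ℚ) with hZ
  set A : Matrix V V ℚ := Matrix.of fun a b => (Fintype.card (a ⟶ b) : ℚ) with hA
  have key : Z * (1 - A) = 1 := by
    have hZA : Z = 1 + Z * A := by
      ext a c
      simpa [Matrix.mul_apply, Matrix.one_apply, hZ, hA] using card_eq circuitFree a c
    rw [Matrix.mul_sub, Matrix.mul_one]
    nth_rewrite 1 [hZA]
    abel
  exact ⟨key, mul_eq_one_comm.mp key⟩

end Stmt11Aux
open scoped Classical in
/-- **Proposition 2.10** (Leinster). For a finite circuit-free directed graph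
`G` (a quiver `V`), the free category `F(G)` (Mathlib's `Paths V`, whose
hom-sets are `Quiver.Path a b`) is a finite category, it has Möbius inversion
`μ = δ - ζ_G`, and its Euler characteristic is defined and equals
`|G₀| - |G₁|`. -/
theorem stmt_11 {V : Type u} [Quiver.{v + 1} V] [Fintype V]
    [∀ a b : V, Fintype (a ⟶ b)]
    (circuitFree : ∀ (a : V) (p : Quiver.Path a a), p.length = 0) :
    -- the free category on `V` is finite
    (∀ a b : Paths V, Finite (a ⟶ b)) ∧
    -- it has Möbius inversion `μ = δ - ζ_G`
    ((∀ a c : V,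
        ∑ b : V, ((if a = b then 1 else 0) - (Fintype.card (a ⟶ b) : ℚ)) *
          (Nat.card (Quiver.Path b c) : ℚ) = if a = c then 1 else 0) ∧
     (∀ a c : V,
        ∑ b : V, (Nat.card (Quiver.Path a b) : ℚ) *
          ((if b = c then 1 else 0) - (Fintype.card (b ⟶ c) : ℚ)) =
          if a = c then 1 else 0)) ∧
    -- its Euler characteristic is defined and equals `|G₀| - |G₁|`
    (∃ k k' : V → ℚ,
      (∀ a : V, ∑ b : V, (Nat.card (Quiver.Path a b) : ℚ) * k b = 1) ∧
      (∀ b : V, ∑ a : V, k' a * (Nat.card (Quiver.Path a b) : ℚ) = 1) ∧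
      ∑ a : V, k a =
        (Fintype.card V : ℚ) - ∑ a : V, ∑ b : V, (Fintype.card (a ⟶ b) : ℚ) ∧
      ∑ a : V, k' a =
        (Fintype.card V : ℚ) - ∑ a : V, ∑ b : V, (Fintype.card (a ⟶ b) : ℚ)) := by
  classical
  obtain ⟨h1, h2⟩ := Stmt11Aux.matrix_eqs circuitFree
  have H2 : ∀ a c : V,
      ∑ b : V, ((if a = b then 1 else 0) - (Fintype.card (a ⟶ b) : ℚ)) *
        (Nat.card (Quiver.Path b c) : ℚ) = if a = c then 1 else 0 := by
    intro a c
    have e : (((1 : Matrix V V ℚ) -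
        Matrix.of fun a b : V => (Fintype.card (a ⟶ b) : ℚ)) *
        Matrix.of fun a b : V => (Nat.card (Quiver.Path a b) : ℚ)) a c =
        (1 : Matrix V V ℚ) a c := by rw [h2]
    simpa [Matrix.mul_apply, Matrix.sub_apply, Matrix.one_apply] using e
  have H1 : ∀ a c : V,
      ∑ b : V, (Nat.card (Quiver.Path a b) : ℚ) *
        ((if b = c then 1 else 0) - (Fintype.card (b ⟶ c) : ℚ)) =
        if a = c then 1 else 0 := by
    intro a c
    have e : ((Matrix.of fun a b : V => (Nat.card (Quiver.Path a b) : ℚ)) *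
        ((1 : Matrix V V ℚ) -
        Matrix.of fun a b : V => (Fintype.card (a ⟶ b) : ℚ))) a c =
        (1 : Matrix V V ℚ) a c := by rw [h1]
    simpa [Matrix.mul_apply, Matrix.sub_apply, Matrix.one_apply] using e
  refine ⟨fun a b => Stmt11Aux.finitePath circuitFree a b, ⟨H2, H1⟩, ?_⟩
  refine ⟨fun b => 1 - ∑ c : V, (Fintype.card (b ⟶ c) : ℚ),
      fun a => 1 - ∑ c : V, (Fintype.card (c ⟶ a) : ℚ), ?_, ?_, ?_, ?_⟩
  · intro a
    have : ∀ b : V, (1 : ℚ) - ∑ c : V, (Fintype.card (b ⟶ c) : ℚ) =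
        ∑ c : V, ((if b = c then 1 else 0) - (Fintype.card (b ⟶ c) : ℚ)) := by
      intro b; rw [Finset.sum_sub_distrib]; simp
    simp_rw [this, Finset.mul_sum]
    rw [Finset.sum_comm]
    simp_rw [H1]
    simp
  · intro b
    have : ∀ a : V, (1 : ℚ) - ∑ c : V, (Fintype.card (c ⟶ a) : ℚ) =
        ∑ c : V, ((if c = a then 1 else 0) - (Fintype.card (c ⟶ a) : ℚ)) := by
      intro a; rw [Finset.sum_sub_distrib]; simp
    simp_rw [this, Finset.sum_mul]
    rw [Finset.sum_comm]
    simp_rw [H2]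
    simp
  · rw [Finset.sum_sub_distrib]; simp [Finset.card_univ]
  · rw [Finset.sum_sub_distrib, Finset.sum_comm]; simp [Finset.card_univ]
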